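/- Let A_1,…,A_5 be the linear endomorphisms of ℝ^5 (coordinates (X,Y,U1,U2,U3)) given by A_1 = (2X, 2Y, U1, U2, U3), A_2 = (0, 0, −8Y, 4X, 0), A_3 = (0, 0, 0, 0, 2Y), A_4 = (0, 0, 4X, −8Y, 0), A_5 = 0. Then for every linear form L : ℝ^5 → ℝ, the linear span of the six linear forms L∘A_1,…,L∘A_5 and L in the dual space of ℝ^5 has dimension at most 3. -/

import Mathlib

open Matrix

/-- The linear part `A₁ = (2X, 2Y, U1, U2, U3)` of `η₁ ∈ Lift(P₂₂)`. -/
noncomputable def A1 : (Fin 5 → ℝ) →ₗ[ℝ] (Fin 5 → ℝ) :=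
  (Matrix.diagonal ![2, 2, 1, 1, 1]).mulVecLin

/-- The linear part `A₂ = (0, 0, −8Y, 4X, 0)` of `η₂ ∈ Lift(P₂₂)`. -/
noncomputable def A2 : (Fin 5 → ℝ) →ₗ[ℝ] (Fin 5 → ℝ) :=
  ((Matrix.single 2 1 (-8) + Matrix.single 3 0 4 :
    Matrix (Fin 5) (Fin 5) ℝ)).mulVecLin

/-- The linear part `A₃ = (0, 0, 0, 0, 2Y)` of `η₃ ∈ Lift(P₂₂)`. -/
noncomputable def A3 : (Fin 5 → ℝ) →ₗ[ℝ] (Fin 5 → ℝ) :=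
  ((Matrix.single 4 1 2 : Matrix (Fin 5) (Fin 5) ℝ)).mulVecLin

/-- The linear part `A₄ = (0, 0, 4X, −8Y, 0)` of `η₄ ∈ Lift(P₂₂)`. -/
noncomputable def A4 : (Fin 5 → ℝ) →ₗ[ℝ] (Fin 5 → ℝ) :=
  ((Matrix.single 2 0 4 + Matrix.single 3 1 (-8) :
    Matrix (Fin 5) (Fin 5) ℝ)).mulVecLin

/-- The linear part `A₅ = 0` of `η₅ ∈ Lift(P₂₂)`. -/
noncomputable def A5 : (Fin 5 → ℝ) →ₗ[ℝ] (Fin 5 → ℝ) := 0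

/-- For every linear form `L : ℝ⁵ → ℝ`, the span of `L∘A₁, …, L∘A₅, L` in the dual of
`ℝ⁵` has dimension at most `3`. This rank bound shows that `P₂₂` admits no hyperplane
section of `𝒜ₑ`-codimension `1` (nor `2`), whence `(5,4)` is not in the extra-nice
dimensions. -/
theorem span_L_comp_liftP22_linear_parts_le_three :
    ∀ L : (Fin 5 → ℝ) →ₗ[ℝ] ℝ,
      Module.finrank ℝ
        (Submodule.span ℝ
          ({L ∘ₗ A1, L ∘ₗ A2, L ∘ₗ A3, L ∘ₗ A4, L ∘ₗ A5, L} :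
            Set ((Fin 5 → ℝ) →ₗ[ℝ] ℝ))) ≤ 3 := by
  classical
  intro L
  set e : Fin 5 → (Fin 5 → ℝ) := fun i => (fun j => if i = j then 1 else 0) with he
  set f0 : (Fin 5 → ℝ) →ₗ[ℝ] ℝ := LinearMap.proj 0 with hf0
  set f1 : (Fin 5 → ℝ) →ₗ[ℝ] ℝ := LinearMap.proj 1 with hf1
  set w : (Fin 5 → ℝ) →ₗ[ℝ] ℝ := (2 : ℝ) • L - L ∘ₗ A1 with hw
  have hA1 : L ∘ₗ A1 = (2 : ℝ) • L - w := by rw [hw]; abel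
  have hL : L = (L (e 0)) • f0 + (L (e 1)) • f1 + w := by
    apply LinearMap.ext; intro v
    rw [hw]
    simp only [LinearMap.add_apply, LinearMap.sub_apply, LinearMap.smul_apply,
      LinearMap.comp_apply, hf0, hf1, LinearMap.proj_apply, smul_eq_mul, A1]
    rw [LinearMap.pi_apply_eq_sum_univ L v, LinearMap.pi_apply_eq_sum_univ L
      ((Matrix.diagonal ![2, 2, 1, 1, 1]).mulVecLin v)]
    simp [Fin.sum_univ_five, Matrix.mulVec_diagonal, smul_eq_mul, he]
    ring
  have hA2 : L ∘ₗ A2 = (4 * L (e 3)) • f0 + (-8 * L (e 2)) • f1 := by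
    apply LinearMap.ext; intro v
    simp only [LinearMap.add_apply, LinearMap.smul_apply, LinearMap.comp_apply,
      hf0, hf1, LinearMap.proj_apply, smul_eq_mul, A2]
    rw [LinearMap.pi_apply_eq_sum_univ L]
    simp [Fin.sum_univ_five, Matrix.mulVec, Matrix.single, dotProduct,
      Matrix.add_apply, he]
    norm_num [Fin.ext_iff]
    ring
  have hA3 : L ∘ₗ A3 = (2 * L (e 4)) • f1 := by
    apply LinearMap.ext; intro v
    simp only [LinearMap.smul_apply, LinearMap.comp_apply,
      hf1, LinearMap.proj_apply, smul_eq_mul, A3]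
    rw [LinearMap.pi_apply_eq_sum_univ L]
    simp [Fin.sum_univ_five, Matrix.mulVec, Matrix.single, dotProduct, he]
    norm_num [Fin.ext_iff]
    ring
  have hA4 : L ∘ₗ A4 = (4 * L (e 2)) • f0 + (-8 * L (e 3)) • f1 := by
    apply LinearMap.ext; intro v
    simp only [LinearMap.add_apply, LinearMap.smul_apply, LinearMap.comp_apply,
      hf0, hf1, LinearMap.proj_apply, smul_eq_mul, A4]
    rw [LinearMap.pi_apply_eq_sum_univ L]
    simp [Fin.sum_univ_five, Matrix.mulVec, Matrix.single, dotProduct,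
      Matrix.add_apply, he]
    norm_num [Fin.ext_iff]
    ring
  have hA5 : L ∘ₗ A5 = 0 := by
    apply LinearMap.ext; intro v; simp [A5]
  set S : Submodule ℝ ((Fin 5 → ℝ) →ₗ[ℝ] ℝ) := Submodule.span ℝ {f0, f1, w} with hS
  have hf0S : f0 ∈ S := Submodule.subset_span (by simp)
  have hf1S : f1 ∈ S := Submodule.subset_span (by simp)
  have hwS : w ∈ S := Submodule.subset_span (by simp)
  have hLS : L ∈ S := by
    rw [hL]; exact S.add_mem (S.add_mem (S.smul_mem _ hf0S) (S.smul_mem _ hf1S)) hwS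
  have hA1S : L ∘ₗ A1 ∈ S := by
    rw [hA1]; exact S.sub_mem (S.smul_mem _ hLS) hwS
  have hle : Submodule.span ℝ
      ({L ∘ₗ A1, L ∘ₗ A2, L ∘ₗ A3, L ∘ₗ A4, L ∘ₗ A5, L} :
        Set ((Fin 5 → ℝ) →ₗ[ℝ] ℝ)) ≤ S := by
    rw [Submodule.span_le]
    intro x hx
    simp only [Set.mem_insert_iff, Set.mem_singleton_iff] at hx
    rcases hx with rfl | rfl | rfl | rfl | rfl | rfl
    · exact hA1S
    · rw [hA2]; exact S.add_mem (S.smul_mem _ hf0S) (S.smul_mem _ hf1S)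
    · rw [hA3]; exact S.smul_mem _ hf1S
    · rw [hA4]; exact S.add_mem (S.smul_mem _ hf0S) (S.smul_mem _ hf1S)
    · rw [hA5]; exact S.zero_mem
    · exact hLS
  calc Module.finrank ℝ (Submodule.span ℝ
        ({L ∘ₗ A1, L ∘ₗ A2, L ∘ₗ A3, L ∘ₗ A4, L ∘ₗ A5, L} :
          Set ((Fin 5 → ℝ) →ₗ[ℝ] ℝ))) ≤ Module.finrank ℝ S :=
        Submodule.finrank_mono hle
    _ ≤ 3 := by
        have h := finrank_span_le_card (R := ℝ) ({f0, f1, w} : Set _)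
        rw [← hS] at h
        refine h.trans ?_
        rw [Set.toFinset_insert, Set.toFinset_insert, Set.toFinset_singleton]
        refine (Finset.card_insert_le _ _).trans (Nat.succ_le_succ ?_)
        exact (Finset.card_insert_le _ _).trans (by simp)
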